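/- Let d ≥ 2. The set of f ∈ Homeo([0,1]^d) such that for every x ∈ [0,1]^d, limsup_{y→x} |f(x) - f(y)| / |x - y| = ∞, is a comeager subset of Homeo([0,1]^d). In particular, the generic homeomorphism of [0,1]^d is nowhere differentiable. -/

import Mathlib

open MeasureTheory Metric Set Filter Topology

/-- The unit cube `[0,1]^d` in Euclidean space. -/
def cube (d : ℕ) : Set (EuclideanSpace ℝ (Fin d)) := {x | ∀ i, x i ∈ Icc (0 : ℝ) 1}

/-- The space of homeomorphisms of the cube `[0,1]^d`, as a subspace of the
space of continuous self-maps of the cube (with the uniform topology). -/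
def HomeoCube (d : ℕ) : Type := {g : C(↥(cube d), ↥(cube d)) // IsHomeomorph g}

noncomputable instance (d : ℕ) : TopologicalSpace (HomeoCube d) :=
  instTopologicalSpaceSubtype


namespace ND

noncomputable def mfun (A σ t : ℝ) : ℝ :=
  max (min ((64*A/σ)*t) (16*A + ((1-32*A)/(1-σ/2))*(t - σ/4))) (1 + (64*A/σ)*(t-1))

noncomputable def bfun (A x : ℝ) : ℝ := min 1 (min (x/(2*A)) ((1-x)/(2*A)))

noncomputable def cfun (δ v : ℝ) : ℝ := (1 + Real.cos (Real.pi * v / δ))/2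

noncomputable def gfun (A σ δ u v : ℝ) : ℝ :=
  mfun A σ u + A * cfun δ v * bfun A (mfun A σ u)

section scalar
variable {A σ δ : ℝ} (hA : 0 < A) (hA64 : A ≤ 1/64) (hσ : 0 < σ) (hσA : σ ≤ A)
include hA hA64 hσ hσA

lemma s2_pos : (0:ℝ) < (1-32*A)/(1-σ/2) := by
  apply div_pos <;> nlinarith

lemma s2_le_one : (1-32*A)/(1-σ/2) ≤ 1 := by
  rw [div_le_one (by nlinarith)]; nlinarith

lemma mfun_strictMono : StrictMono (mfun A σ) := by
  intro x y hxy
  have h1 : (0:ℝ) < 64*A/σ := by positivity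
  have h2 := s2_pos hA hA64 hσ hσA
  unfold mfun
  apply max_lt_max
  · apply min_lt_min
    · nlinarith
    · nlinarith
  · nlinarith

omit hA hA64 hσ hσA in
lemma mfun_cont : Continuous (mfun A σ) := by
  unfold mfun; fun_prop

lemma hAσ1 : (1:ℝ) ≤ A/σ := (one_le_div hσ).2 hσA

lemma hAσ64 : (64:ℝ) ≤ 64*A/σ := by
  have := hAσ1 hA hA64 hσ hσA
  rw [mul_div_assoc]; nlinarith

lemma mfun_zero : mfun A σ 0 = 0 := by
  have h2 := s2_pos hA hA64 hσ hσA
  have h3 := s2_le_one hA hA64 hσ hσA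
  have h4 := hAσ64 hA hA64 hσ hσA
  unfold mfun
  rw [min_eq_left (by nlinarith), max_eq_left (by nlinarith)]
  ring

lemma mfun_one : mfun A σ 1 = 1 := by
  have h2 := s2_pos hA hA64 hσ hσA
  have h3 := s2_le_one hA hA64 hσ hσA
  have h4 := hAσ64 hA hA64 hσ hσA
  have h5 : ((1-32*A)/(1-σ/2))*(σ/4) ≤ σ/4 := by nlinarith
  have expand : ((1-32*A)/(1-σ/2))*(1-σ/4) = (1-32*A) + ((1-32*A)/(1-σ/2))*(σ/4) := by
    rw [show (1:ℝ)-σ/4 = (1-σ/2)+σ/4 by ring, mul_add, div_mul_cancel₀ _ (by nlinarith : (1:ℝ)-σ/2 ≠ 0)]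
  have hL21 : 16*A + ((1-32*A)/(1-σ/2))*(1 - σ/4) = 1 - 16*A + ((1-32*A)/(1-σ/2))*(σ/4) := by
    linarith [expand]
  unfold mfun
  rw [min_eq_right (by nlinarith), max_eq_right (by nlinarith)]
  ring

lemma mfun_left : mfun A σ (σ/4) = 16*A := by
  have h2 := s2_pos hA hA64 hσ hσA
  have h4 := hAσ64 hA hA64 hσ hσA
  have hL1 : (64*A/σ)*(σ/4) = 16*A := by field_simp; ring
  unfold mfun
  rw [hL1]
  rw [show (16*A + ((1-32*A)/(1-σ/2))*(σ/4 - σ/4)) = 16*A by ring, min_self,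
    max_eq_left (by nlinarith)]

lemma mfun_right : mfun A σ (1-σ/4) = 1-16*A := by
  have h2 := s2_pos hA hA64 hσ hσA
  have h3 := s2_le_one hA hA64 hσ hσA
  have h4 := hAσ64 hA hA64 hσ hσA
  have hL1 : (64*A/σ)*(1-σ/4) = 64*A/σ - 16*A := by field_simp; ring
  have hL3 : 1 + (64*A/σ)*((1-σ/4)-1) = 1 - 16*A := by field_simp; ring
  have hL2 : 16*A + ((1-32*A)/(1-σ/2))*((1-σ/4) - σ/4) = 1-16*A := by
    rw [show (1-σ/4) - σ/4 = 1 - σ/2 by ring, div_mul_cancel₀ _ (by nlinarith)]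
    ring
  unfold mfun
  rw [hL1, hL2, hL3, min_eq_right (by nlinarith), max_self]


lemma mfun_mem (t : ℝ) (ht : t ∈ Icc (0:ℝ) 1) : mfun A σ t ∈ Icc (0:ℝ) 1 := by
  have hm := (mfun_strictMono hA hA64 hσ hσA).monotone
  constructor
  · rw [← mfun_zero hA hA64 hσ hσA]; exact hm ht.1
  · rw [← mfun_one hA hA64 hσ hσA]; exact hm ht.2

lemma mfun_ge (t : ℝ) (ht : σ/4 ≤ t) : 16*A ≤ mfun A σ t := by
  rw [← mfun_left hA hA64 hσ hσA]
  exact (mfun_strictMono hA hA64 hσ hσA).monotone ht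

lemma mfun_le (t : ℝ) (ht : t ≤ 1 - σ/4) : mfun A σ t ≤ 1 - 16*A := by
  rw [← mfun_right hA hA64 hσ hσA]
  exact (mfun_strictMono hA hA64 hσ hσA).monotone ht

lemma mfun_middle (t : ℝ) (h1 : σ/4 ≤ t) (h2 : t ≤ 1 - σ/4) :
    mfun A σ t = 16*A + ((1-32*A)/(1-σ/2))*(t - σ/4) := by
  have hs2 := s2_pos hA hA64 hσ hσA
  have hs1 := s2_le_one hA hA64 hσ hσA
  have h4 := hAσ64 hA hA64 hσ hσA
  have hL1 : (64*A/σ)*(σ/4) = 16*A := by field_simp; ring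
  have hL1ge : 16*A + ((1-32*A)/(1-σ/2))*(t - σ/4) ≤ (64*A/σ)*t := by
    have e1 : (64*A/σ)*t = 16*A + (64*A/σ)*(t - σ/4) := by rw [mul_sub, hL1]; ring
    rw [e1]
    have : ((1-32*A)/(1-σ/2))*(t - σ/4) ≤ (64*A/σ)*(t-σ/4) := by
      apply mul_le_mul_of_nonneg_right (by nlinarith) (by linarith)
    linarith
  have hL3le : 1 + (64*A/σ)*(t-1) ≤ 16*A + ((1-32*A)/(1-σ/2))*(t - σ/4) := by
    have hc : ((1-32*A)/(1-σ/2))*((1-σ/4) - σ/4) = 1 - 32*A := by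
      rw [show (1-σ/4) - σ/4 = 1 - σ/2 by ring, div_mul_cancel₀ _ (by nlinarith)]
    have e2 : 16*A + ((1-32*A)/(1-σ/2))*(t - σ/4)
        = 1 - 16*A - ((1-32*A)/(1-σ/2))*((1-σ/4) - t) := by
      rw [show (t - σ/4 : ℝ) = ((1-σ/4) - σ/4) - ((1-σ/4) - t) by ring, mul_sub, hc]; ring
    have e3 : 1 + (64*A/σ)*(t-1) = 1 - 16*A - ((64*A/σ)*((1-σ/4) - t) + (64*A/σ)*(σ/4) - 16*A) := by
      ring
    rw [e2, e3, hL1]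
    have : ((1-32*A)/(1-σ/2))*((1-σ/4) - t) ≤ (64*A/σ)*((1-σ/4)-t) := by
      apply mul_le_mul_of_nonneg_right (by nlinarith) (by linarith)
    linarith
  unfold mfun
  rw [min_eq_right hL1ge, max_eq_left hL3le]

lemma mfun_dist (t : ℝ) (ht : t ∈ Icc (0:ℝ) 1) : |mfun A σ t - t| ≤ 16*A := by
  have hσ16 : σ/4 ≤ 16*A := by nlinarith
  rcases le_or_gt t (σ/4) with hc | hc
  · have h1 : mfun A σ t ∈ Icc (0:ℝ) (16*A) := by
      constructor
      · rw [← mfun_zero hA hA64 hσ hσA]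
        exact (mfun_strictMono hA hA64 hσ hσA).monotone ht.1
      · rw [← mfun_left hA hA64 hσ hσA]
        exact (mfun_strictMono hA hA64 hσ hσA).monotone hc
    rw [abs_le]; constructor <;> [nlinarith [h1.1, ht.2]; nlinarith [h1.2, ht.1]]
  rcases le_or_gt (1-σ/4) t with hc2 | hc2
  · have h1 : mfun A σ t ∈ Icc (1-16*A) 1 := by
      constructor
      · rw [← mfun_right hA hA64 hσ hσA]
        exact (mfun_strictMono hA hA64 hσ hσA).monotone hc2
      · rw [← mfun_one hA hA64 hσ hσA]
        exact (mfun_strictMono hA hA64 hσ hσA).monotone ht.2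
    rw [abs_le]; constructor <;> [nlinarith [h1.1, ht.2]; nlinarith [h1.2, ht.1]]
  · rw [mfun_middle hA hA64 hσ hσA t hc.le hc2.le]
    have hs2 := s2_pos hA hA64 hσ hσA
    have hs1 := s2_le_one hA hA64 hσ hσA
    have hup : ((1-32*A)/(1-σ/2))*(t - σ/4) ≤ t - σ/4 := by nlinarith
    have hlo : (t - σ/4) - (32*A - σ/2) ≤ ((1-32*A)/(1-σ/2))*(t - σ/4) := by
      have hc : ((1-32*A)/(1-σ/2))*(1 - σ/2) = 1 - 32*A := by
        rw [div_mul_cancel₀ _ (by nlinarith : (1:ℝ)-σ/2 ≠ 0)]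
      nlinarith [mul_le_mul_of_nonneg_left (show t - σ/4 ≤ 1 - σ/2 by linarith)
        (le_of_lt hs2)]
    rw [abs_le]; constructor <;> nlinarith

-- bfun lemmas
omit hA hA64 hσ hσA in
lemma bfun_cont : Continuous (bfun A) := by
  unfold bfun; fun_prop

lemma bfun_zero : bfun A 0 = 0 := by
  unfold bfun
  rw [zero_div, min_eq_left (by rw [show (1:ℝ)-0 = 1 by norm_num]; positivity : (0:ℝ) ≤ (1-0)/(2*A)),
    min_eq_right (by norm_num : (0:ℝ) ≤ 1)]

lemma bfun_one : bfun A 1 = 0 := by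
  unfold bfun
  rw [show ((1:ℝ)-1)/(2*A) = 0 by ring, min_eq_right (by positivity : (0:ℝ) ≤ 1/(2*A)),
    min_eq_right (by norm_num : (0:ℝ) ≤ 1)]

lemma bfun_nonneg (x : ℝ) (hx : x ∈ Icc (0:ℝ) 1) : 0 ≤ bfun A x := by
  unfold bfun
  exact le_min (by norm_num) (le_min (div_nonneg hx.1 (by positivity))
    (div_nonneg (by linarith [hx.2]) (by positivity)))

omit hA hA64 hσ hσA in
lemma bfun_le_one (x : ℝ) : bfun A x ≤ 1 := min_le_left _ _

lemma bfun_plateau (x : ℝ) (h1 : 16*A ≤ x) (h2 : x ≤ 1-16*A) : bfun A x = 1 := by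
  unfold bfun
  apply min_eq_left
  apply le_min
  · rw [le_div_iff₀ (by positivity)]; nlinarith
  · rw [le_div_iff₀ (by positivity)]; nlinarith

lemma bfun_diff (x y : ℝ) (hxy : x ≤ y) : bfun A x - bfun A y ≤ (y-x)/(2*A) := by
  have hd : (0:ℝ) < 2*A := by positivity
  have hnn : 0 ≤ (y-x)/(2*A) := by
    apply div_nonneg (by linarith) hd.le
  have hx1 : bfun A x ≤ 1 := min_le_left _ _
  have hx2 : bfun A x ≤ x/(2*A) := le_trans (min_le_right _ _) (min_le_left _ _)
  have hx3 : bfun A x ≤ (1-x)/(2*A) := le_trans (min_le_right _ _) (min_le_right _ _)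
  have e : (1-x)/(2*A) = (1-y)/(2*A) + (y-x)/(2*A) := by ring
  have e2 : x/(2*A) ≤ y/(2*A) := by gcongr
  rcases min_cases 1 (min (y/(2*A)) ((1-y)/(2*A))) with ⟨h,_⟩|⟨h,_⟩ <;>
    rw [show bfun A y = min 1 (min (y/(2*A)) ((1-y)/(2*A))) from rfl, h]
  · linarith
  · rcases min_cases (y/(2*A)) ((1-y)/(2*A)) with ⟨h2,_⟩|⟨h2,_⟩ <;> rw [h2] <;> linarith

lemma shear_mono (t x y : ℝ) (ht0 : 0 ≤ t) (htA : t ≤ A) (hxy : x < y) :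
    x + t * bfun A x < y + t * bfun A y := by
  have hd := bfun_diff hA hA64 hσ hσA x y hxy.le
  have h1 : t * (bfun A x - bfun A y) ≤ t * ((y-x)/(2*A)) :=
    mul_le_mul_of_nonneg_left hd ht0
  have h2 : t * ((y-x)/(2*A)) ≤ A * ((y-x)/(2*A)) :=
    mul_le_mul_of_nonneg_right htA (div_nonneg (by linarith) (by positivity))
  have h3 : A * ((y-x)/(2*A)) = (y-x)/2 := by field_simp
  nlinarith

-- cfun lemmas
omit hA hA64 hσ hσA in
lemma cfun_cont : Continuous (cfun δ) := by
  unfold cfun; fun_prop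

omit hA hA64 hσ hσA in
lemma cfun_nonneg (v : ℝ) : 0 ≤ cfun δ v := by
  unfold cfun; linarith [Real.neg_one_le_cos (Real.pi * v / δ)]

omit hA hA64 hσ hσA in
lemma cfun_le_one (v : ℝ) : cfun δ v ≤ 1 := by
  unfold cfun; linarith [Real.cos_le_one (Real.pi * v / δ)]

omit hA hA64 hσ hσA in
lemma cfun_even (hδ : δ ≠ 0) (k : ℤ) : cfun δ (δ*(2*k)) = 1 := by
  unfold cfun
  rw [show Real.pi * (δ*(2*k))/δ = (k:ℝ) * (2*Real.pi) by field_simp,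
    Real.cos_int_mul_two_pi]
  norm_num

omit hA hA64 hσ hσA in
lemma cfun_odd (hδ : δ ≠ 0) (k : ℤ) : cfun δ (δ*(2*k+1)) = 0 := by
  unfold cfun
  rw [show Real.pi * (δ*(2*k+1))/δ = (k:ℝ) * (2*Real.pi) + Real.pi by field_simp,
    Real.cos_int_mul_two_pi_add_pi]
  norm_num

-- gfun lemmas
omit hA hA64 hσ hσA in
lemma gfun_cont : Continuous (fun p : ℝ × ℝ => gfun A σ δ p.1 p.2) := by
  unfold gfun
  exact ((mfun_cont).comp continuous_fst).add
    ((continuous_const.mul ((cfun_cont).comp continuous_snd)).mul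
      ((bfun_cont).comp ((mfun_cont).comp continuous_fst)))

lemma gfun_strictMono (v : ℝ) : StrictMono (fun u => gfun A σ δ u v) := by
  intro x y hxy
  have hm := mfun_strictMono hA hA64 hσ hσA hxy
  have hc0 := cfun_nonneg (δ:=δ) v
  have hc1 := cfun_le_one (δ:=δ) v
  have := shear_mono hA hA64 hσ hσA (A * cfun δ v) (mfun A σ x) (mfun A σ y)
    (mul_nonneg hA.le hc0) (by nlinarith) hm
  exact this

lemma gfun_zero (v : ℝ) : gfun A σ δ 0 v = 0 := by
  unfold gfun
  rw [mfun_zero hA hA64 hσ hσA, bfun_zero hA hA64 hσ hσA]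
  ring

lemma gfun_one (v : ℝ) : gfun A σ δ 1 v = 1 := by
  unfold gfun
  rw [mfun_one hA hA64 hσ hσA, bfun_one hA hA64 hσ hσA]
  ring

lemma gfun_mem (u v : ℝ) (hu : u ∈ Icc (0:ℝ) 1) : gfun A σ δ u v ∈ Icc (0:ℝ) 1 := by
  have hm := (gfun_strictMono (δ:=δ) hA hA64 hσ hσA v).monotone
  constructor
  · rw [← gfun_zero hA hA64 hσ hσA v]; exact hm hu.1
  · rw [← gfun_one hA hA64 hσ hσA v]; exact hm hu.2

lemma gfun_surj (v r : ℝ) (hr : r ∈ Icc (0:ℝ) 1) : ∃ u ∈ Icc (0:ℝ) 1, gfun A σ δ u v = r := by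
  have hc : ContinuousOn (fun u => gfun A σ δ u v) (Icc 0 1) :=
    ((gfun_cont (A:=A) (σ:=σ) (δ:=δ)).comp (continuous_id.prodMk continuous_const)).continuousOn
  have := intermediate_value_Icc (by norm_num : (0:ℝ) ≤ 1) hc
  rw [gfun_zero hA hA64 hσ hσA v, gfun_one hA hA64 hσ hσA v] at this
  obtain ⟨u, hu, hgu⟩ := this hr
  exact ⟨u, hu, hgu⟩

lemma gfun_plateau (u v : ℝ) (h1 : σ/4 ≤ u) (h2 : u ≤ 1 - σ/4) :
    gfun A σ δ u v = mfun A σ u + A * cfun δ v := by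
  unfold gfun
  rw [bfun_plateau hA hA64 hσ hσA _ (mfun_ge hA hA64 hσ hσA u h1)
    (mfun_le hA hA64 hσ hσA u h2)]
  ring

-- integer partner choice
lemma exists_even_near (v : ℝ) (hv : v ∈ Icc (0:ℝ) 1) (hδpos : 0 < δ) (h100 : 100*δ ≤ σ) :
    ∃ y ∈ Icc (0:ℝ) 1, |v - y| ≤ σ/2 ∧ cfun δ y = 1 := by
  have h2δ : 0 < 2*δ := by positivity
  rcases le_or_gt v (1/2) with hc | hc
  · refine ⟨δ*(2*(⌈v/(2*δ)⌉:ℤ)), ?_, ?_, cfun_even hδpos.ne' _⟩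
    · have h1 : v/(2*δ) ≤ (⌈v/(2*δ)⌉:ℝ) := Int.le_ceil _
      have h2 : (⌈v/(2*δ)⌉:ℝ) < v/(2*δ) + 1 := Int.ceil_lt_add_one _
      have h3 : v ≤ δ*(2*(⌈v/(2*δ)⌉:ℝ)) := by
        nlinarith [mul_le_mul_of_nonneg_right h1 h2δ.le, div_mul_cancel₀ v h2δ.ne']
      have h4 : δ*(2*(⌈v/(2*δ)⌉:ℝ)) < v + 2*δ := by
        nlinarith [mul_lt_mul_of_pos_right h2 h2δ, div_mul_cancel₀ v h2δ.ne']
      constructor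
      · push_cast; linarith [hv.1]
      · push_cast; nlinarith [hv.2]
    · have h1 : v/(2*δ) ≤ (⌈v/(2*δ)⌉:ℝ) := Int.le_ceil _
      have h2 : (⌈v/(2*δ)⌉:ℝ) < v/(2*δ) + 1 := Int.ceil_lt_add_one _
      have h3 : v ≤ δ*(2*(⌈v/(2*δ)⌉:ℝ)) := by
        nlinarith [mul_le_mul_of_nonneg_right h1 h2δ.le, div_mul_cancel₀ v h2δ.ne']
      have h4 : δ*(2*(⌈v/(2*δ)⌉:ℝ)) < v + 2*δ := by
        nlinarith [mul_lt_mul_of_pos_right h2 h2δ, div_mul_cancel₀ v h2δ.ne']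
      rw [abs_le]; push_cast; constructor <;> nlinarith
  · refine ⟨δ*(2*(⌊v/(2*δ)⌋:ℤ)), ?_, ?_, cfun_even hδpos.ne' _⟩
    · have h1 : (⌊v/(2*δ)⌋:ℝ) ≤ v/(2*δ) := Int.floor_le _
      have h2 : v/(2*δ) < (⌊v/(2*δ)⌋:ℝ) + 1 := Int.lt_floor_add_one _
      have h3 : δ*(2*(⌊v/(2*δ)⌋:ℝ)) ≤ v := by
        nlinarith [mul_le_mul_of_nonneg_right h1 h2δ.le, div_mul_cancel₀ v h2δ.ne']
      have h4 : v - 2*δ < δ*(2*(⌊v/(2*δ)⌋:ℝ)) := by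
        nlinarith [mul_lt_mul_of_pos_right h2 h2δ, div_mul_cancel₀ v h2δ.ne']
      constructor
      · push_cast; nlinarith [hv.1]
      · push_cast; linarith [hv.2]
    · have h1 : (⌊v/(2*δ)⌋:ℝ) ≤ v/(2*δ) := Int.floor_le _
      have h2 : v/(2*δ) < (⌊v/(2*δ)⌋:ℝ) + 1 := Int.lt_floor_add_one _
      have h3 : δ*(2*(⌊v/(2*δ)⌋:ℝ)) ≤ v := by
        nlinarith [mul_le_mul_of_nonneg_right h1 h2δ.le, div_mul_cancel₀ v h2δ.ne']
      have h4 : v - 2*δ < δ*(2*(⌊v/(2*δ)⌋:ℝ)) := by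
        nlinarith [mul_lt_mul_of_pos_right h2 h2δ, div_mul_cancel₀ v h2δ.ne']
      rw [abs_le]; push_cast; constructor <;> nlinarith

lemma exists_odd_near (v : ℝ) (hv : v ∈ Icc (0:ℝ) 1) (hδpos : 0 < δ) (h100 : 100*δ ≤ σ) :
    ∃ y ∈ Icc (0:ℝ) 1, |v - y| ≤ σ/2 ∧ cfun δ y = 0 := by
  have h2δ : 0 < 2*δ := by positivity
  have hσ1 : σ ≤ 1/64 := le_trans hσA hA64
  rcases le_or_gt v (1/2) with hc | hc
  · have h1 : v/(2*δ) ≤ (⌈v/(2*δ)⌉:ℝ) := Int.le_ceil _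
    have h2 : (⌈v/(2*δ)⌉:ℝ) < v/(2*δ) + 1 := Int.ceil_lt_add_one _
    have h3 : v ≤ δ*(2*(⌈v/(2*δ)⌉:ℝ)) := by
      nlinarith [mul_le_mul_of_nonneg_right h1 h2δ.le, div_mul_cancel₀ v h2δ.ne']
    have h4 : δ*(2*(⌈v/(2*δ)⌉:ℝ)) < v + 2*δ := by
      nlinarith [mul_lt_mul_of_pos_right h2 h2δ, div_mul_cancel₀ v h2δ.ne']
    refine ⟨δ*(2*(⌈v/(2*δ)⌉:ℤ)+1), ⟨?_, ?_⟩, ?_, cfun_odd hδpos.ne' _⟩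
    · push_cast; nlinarith [hv.1]
    · push_cast; nlinarith [hv.2]
    · rw [abs_le]; push_cast; constructor <;> nlinarith
  · have h1 : (⌊v/(2*δ)⌋:ℝ) ≤ v/(2*δ) := Int.floor_le _
    have h2 : v/(2*δ) < (⌊v/(2*δ)⌋:ℝ) + 1 := Int.lt_floor_add_one _
    have h3 : δ*(2*(⌊v/(2*δ)⌋:ℝ)) ≤ v := by
      nlinarith [mul_le_mul_of_nonneg_right h1 h2δ.le, div_mul_cancel₀ v h2δ.ne']
    have h4 : v - 2*δ < δ*(2*(⌊v/(2*δ)⌋:ℝ)) := by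
      nlinarith [mul_lt_mul_of_pos_right h2 h2δ, div_mul_cancel₀ v h2δ.ne']
    refine ⟨δ*(2*((⌊v/(2*δ)⌋ - 1 : ℤ):ℝ)+1), ⟨?_, ?_⟩, ?_, cfun_odd hδpos.ne' (⌊v/(2*δ)⌋ - 1)⟩
    · push_cast; nlinarith [hv.1]
    · push_cast; nlinarith [hv.2]
    · rw [abs_le]; push_cast; constructor <;> nlinarith

lemma exists_partner (v θ : ℝ) (hv : v ∈ Icc (0:ℝ) 1) (hθ : θ ∈ Icc (0:ℝ) 1)
    (hδpos : 0 < δ) (h100 : 100*δ ≤ σ) :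
    ∃ y ∈ Icc (0:ℝ) 1, |v - y| ≤ σ/2 ∧ 1/2 ≤ |θ - cfun δ y| := by
  rcases le_or_gt (1/2) θ with hc | hc
  · obtain ⟨y, hy, hnear, hval⟩ := exists_odd_near hA hA64 hσ hσA v hv hδpos h100
    exact ⟨y, hy, hnear, by rw [hval]; rw [abs_of_nonneg (by linarith [hθ.1])]; linarith⟩
  · obtain ⟨y, hy, hnear, hval⟩ := exists_even_near hA hA64 hσ hσA v hv hδpos h100
    exact ⟨y, hy, hnear, by rw [hval]; rw [abs_of_nonpos (by linarith [hθ.2])]; linarith⟩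

end scalar
end ND
-- vector layer
namespace ND
open Metric Set

section cube
variable {d : ℕ}

lemma coord_dist_le (x y : EuclideanSpace ℝ (Fin d)) (i : Fin d) :
    dist (x i) (y i) ≤ dist x y := by
  rw [EuclideanSpace.dist_eq, show dist (x i) (y i) = Real.sqrt (dist (x i) (y i)^2) from
    (Real.sqrt_sq dist_nonneg).symm]
  exact Real.sqrt_le_sqrt (Finset.single_le_sum (f := fun j => dist (x j) (y j)^2)
    (fun j _ => sq_nonneg _) (Finset.mem_univ i))

lemma dist_single (x y : EuclideanSpace ℝ (Fin d)) (i : Fin d)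
    (h : ∀ j, j ≠ i → x j = y j) : dist x y = dist (x i) (y i) := by
  rw [EuclideanSpace.dist_eq, Finset.sum_eq_single i
    (fun j _ hj => by rw [h j hj, dist_self]; ring)
    (fun hi => absurd (Finset.mem_univ i) hi), Real.sqrt_sq dist_nonneg]

lemma isCompact_cube : IsCompact (cube d) := by
  apply isCompact_of_isClosed_isBounded
  · have : cube d = ⋂ i, (fun x : EuclideanSpace ℝ (Fin d) => x i) ⁻¹' (Icc (0:ℝ) 1) := by
      ext x; simp [cube, Set.mem_iInter]
    rw [this]
    exact isClosed_iInter fun i => IsClosed.preimage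
      ((continuous_apply i).comp (EuclideanSpace.equiv (Fin d) ℝ).continuous) isClosed_Icc
  · rw [Metric.isBounded_iff]
    refine ⟨Real.sqrt d, fun x hx y hy => ?_⟩
    rw [EuclideanSpace.dist_eq]
    apply Real.sqrt_le_sqrt ∘ le_trans (Finset.sum_le_card_nsmul _ _ 1 ?_)
    · rw [nsmul_eq_mul, mul_one]; simp
    · intro i _
      have h1 := hx i; have h2 := hy i
      simp only [Set.mem_Icc] at h1 h2
      have : |x i - y i| ≤ 1 := by rw [abs_le]; constructor <;> linarith [h1.1, h1.2, h2.1, h2.2]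
      have e : dist (x i) (y i)^2 = |x i - y i|^2 := by rw [Real.dist_eq]
      rw [e]
      nlinarith [abs_nonneg (x i - y i)]

instance : CompactSpace ↥(cube d) := isCompact_iff_compactSpace.mp isCompact_cube

instance : Nonempty ↥(cube d) := ⟨⟨0, fun i => (by norm_num : (0:ℝ) ∈ Icc (0:ℝ) 1)⟩⟩

def upd (x : EuclideanSpace ℝ (Fin d)) (i : Fin d) (a : ℝ) : EuclideanSpace ℝ (Fin d) :=
  WithLp.toLp 2 (fun j => if j = i then a else x j)

lemma upd_same (x : EuclideanSpace ℝ (Fin d)) (i : Fin d) (a : ℝ) : upd x i a i = a := by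
  simp [upd]

lemma upd_other (x : EuclideanSpace ℝ (Fin d)) (i j : Fin d) (a : ℝ) (h : j ≠ i) :
    upd x i a j = x j := by simp [upd, h]

lemma upd_mem (x : EuclideanSpace ℝ (Fin d)) (hx : x ∈ cube d) (i : Fin d) (a : ℝ)
    (ha : a ∈ Icc (0:ℝ) 1) : upd x i a ∈ cube d := by
  intro j
  by_cases h : j = i
  · subst h; rw [upd_same]; exact ha
  · rw [upd_other _ _ _ _ h]; exact hx j

lemma upd_dist (x : EuclideanSpace ℝ (Fin d)) (i : Fin d) (a : ℝ) :
    dist (upd x i a) x = |a - x i| := by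
  rw [dist_single _ _ i (fun j hj => upd_other _ _ _ _ hj), upd_same, Real.dist_eq]

end cube
end ND
namespace ND
open Metric Set

section phi
variable {d : ℕ} {A σ δ : ℝ}

def fin0 (hd : 2 ≤ d) : Fin d := ⟨0, by omega⟩
def fin1 (hd : 2 ≤ d) : Fin d := ⟨1, by omega⟩

lemma fin1_ne_fin0 (hd : 2 ≤ d) : fin1 hd ≠ fin0 hd := by
  simp [fin0, fin1, Fin.ext_iff]

noncomputable def phiFun (A σ δ : ℝ) (hd : 2 ≤ d) (x : EuclideanSpace ℝ (Fin d)) :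
    EuclideanSpace ℝ (Fin d) :=
  WithLp.toLp 2 (fun j => if j = fin0 hd then gfun A σ δ (x (fin0 hd)) (x (fin1 hd)) else x j)

lemma phiFun_at0 (hd : 2 ≤ d) (x : EuclideanSpace ℝ (Fin d)) :
    phiFun A σ δ hd x (fin0 hd) = gfun A σ δ (x (fin0 hd)) (x (fin1 hd)) := by
  simp [phiFun]

lemma phiFun_other (hd : 2 ≤ d) (x : EuclideanSpace ℝ (Fin d)) (j : Fin d) (h : j ≠ fin0 hd) :
    phiFun A σ δ hd x j = x j := by
  simp [phiFun, h]

variable (hA : 0 < A) (hA64 : A ≤ 1/64) (hσ : 0 < σ) (hσA : σ ≤ A)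

noncomputable def phi (hA : 0 < A) (hA64 : A ≤ 1/64) (hσ : 0 < σ) (hσA : σ ≤ A)
    (hd : 2 ≤ d) (z : ↥(cube d)) : ↥(cube d) :=
  ⟨phiFun A σ δ hd z.1, by
    intro j
    by_cases h : j = fin0 hd
    · subst h
      rw [phiFun_at0]
      exact gfun_mem hA hA64 hσ hσA _ _ (z.2 _)
    · rw [phiFun_other _ _ _ h]
      exact z.2 j⟩

variable (hd : 2 ≤ d)
include hA hA64 hσ hσA

lemma phi_val (z : ↥(cube d)) : (phi (δ:=δ) hA hA64 hσ hσA hd z).1 = phiFun A σ δ hd z.1 := rfl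

lemma phi_cont : Continuous (phi (δ:=δ) hA hA64 hσ hσA hd) := by
  apply Continuous.subtype_mk
  have hcoord : ∀ i : Fin d, Continuous (fun z : ↥(cube d) => z.1 i) := fun i =>
    (continuous_apply i).comp
      ((EuclideanSpace.equiv (Fin d) ℝ).continuous.comp continuous_subtype_val)
  have hpi : Continuous (fun z : ↥(cube d) =>
      (fun j => if j = fin0 hd then gfun A σ δ (z.1 (fin0 hd)) (z.1 (fin1 hd)) else z.1 j :
        Fin d → ℝ)) := by
    apply continuous_pi
    intro j
    by_cases h : j = fin0 hd
    · simp only [if_pos h]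
      exact (gfun_cont (A:=A) (σ:=σ) (δ:=δ)).comp ((hcoord _).prodMk (hcoord _))
    · simp only [if_neg h]
      exact hcoord j
  exact ((PiLp.continuous_toLp 2 _).comp hpi : _)

lemma phi_inj : Function.Injective (phi (δ:=δ) hA hA64 hσ hσA hd) := by
  intro z z' h
  have hv : phiFun A σ δ hd z.1 = phiFun A σ δ hd z'.1 := congrArg Subtype.val h
  have hco : ∀ j, phiFun A σ δ hd z.1 j = phiFun A σ δ hd z'.1 j := fun j => congrArg (· j) hv
  have hoth : ∀ j, j ≠ fin0 hd → z.1 j = z'.1 j := by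
    intro j hj
    have := hco j
    rwa [phiFun_other _ _ _ hj, phiFun_other _ _ _ hj] at this
  apply Subtype.ext
  ext j
  by_cases hj : j = fin0 hd
  · subst hj
    have h0 := hco (fin0 hd)
    rw [phiFun_at0, phiFun_at0, hoth (fin1 hd) (fin1_ne_fin0 hd)] at h0
    exact (gfun_strictMono (δ:=δ) hA hA64 hσ hσA (z'.1 (fin1 hd))).injective h0
  · exact hoth j hj

lemma phi_surj : Function.Surjective (phi (δ:=δ) hA hA64 hσ hσA hd) := by
  intro u
  obtain ⟨a, ha, hga⟩ := gfun_surj (δ:=δ) hA hA64 hσ hσA (u.1 (fin1 hd)) (u.1 (fin0 hd))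
    (u.2 (fin0 hd))
  refine ⟨⟨upd u.1 (fin0 hd) a, upd_mem _ u.2 _ _ ha⟩, ?_⟩
  apply Subtype.ext
  ext j
  by_cases hj : j = fin0 hd
  · subst hj
    show phiFun A σ δ hd (upd u.1 (fin0 hd) a) (fin0 hd) = u.1 (fin0 hd)
    rw [phiFun_at0, upd_same, upd_other _ _ _ _ (fin1_ne_fin0 hd)]
    exact hga
  · show phiFun A σ δ hd (upd u.1 (fin0 hd) a) j = u.1 j
    rw [phiFun_other _ _ _ hj, upd_other _ _ _ _ hj]

lemma phi_dist (z : ↥(cube d)) : dist (phi (δ:=δ) hA hA64 hσ hσA hd z) z ≤ 17*A := by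
  rw [Subtype.dist_eq, phi_val, dist_single _ _ (fin0 hd)
    (fun j hj => phiFun_other _ _ _ hj), phiFun_at0, Real.dist_eq]
  set u := z.1 (fin0 hd)
  set v := z.1 (fin1 hd)
  have hu : u ∈ Icc (0:ℝ) 1 := z.2 _
  have hmd := mfun_dist hA hA64 hσ hσA u hu
  have hc0 := cfun_nonneg (δ:=δ) v
  have hc1 := cfun_le_one (δ:=δ) v
  have hb0 := bfun_nonneg hA hA64 hσ hσA _ (mfun_mem hA hA64 hσ hσA u hu)
  have hb1 := bfun_le_one (A:=A) (mfun A σ u)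
  rw [abs_le] at hmd ⊢
  unfold gfun
  have hcb : cfun δ v * bfun A (mfun A σ u) ≤ 1 := mul_le_one₀ hc1 hb0 hb1
  have hcb0 : 0 ≤ cfun δ v * bfun A (mfun A σ u) := mul_nonneg hc0 hb0
  have e : A * cfun δ v * bfun A (mfun A σ u) = A * (cfun δ v * bfun A (mfun A σ u)) := by ring
  have h2 : A * (cfun δ v * bfun A (mfun A σ u)) ≤ A := by nlinarith
  have h3 : 0 ≤ A * (cfun δ v * bfun A (mfun A σ u)) := by positivity
  constructor <;> linarith [hmd.1, hmd.2]

set_option maxHeartbeats 1000000 in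
lemma phi_stretch (hδpos : 0 < δ) (h100 : 100*δ ≤ σ) (p : ↥(cube d)) :
    ∃ q : ↥(cube d), dist p q ≤ σ ∧
      A/2 ≤ dist (phi (δ:=δ) hA hA64 hσ hσA hd p) (phi (δ:=δ) hA hA64 hσ hσA hd q) := by
  set u := p.1 (fin0 hd) with hu_def
  set v := p.1 (fin1 hd) with hv_def
  have hu : u ∈ Icc (0:ℝ) 1 := p.2 _
  have hv : v ∈ Icc (0:ℝ) 1 := p.2 _
  have himg_lb : ∀ q : ↥(cube d),
      dist (gfun A σ δ u v) (gfun A σ δ (q.1 (fin0 hd)) (q.1 (fin1 hd)))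
        ≤ dist (phi (δ:=δ) hA hA64 hσ hσA hd p) (phi (δ:=δ) hA hA64 hσ hσA hd q) := by
    intro q
    rw [Subtype.dist_eq (phi hA hA64 hσ hσA hd p)]
    have := coord_dist_le (phiFun A σ δ hd p.1) (phiFun A σ δ hd q.1) (fin0 hd)
    rw [phiFun_at0, phiFun_at0] at this
    exact this
  rcases lt_or_ge u (σ/4) with hcase | hcase
  · -- left face case
    have hmem0 : (0:ℝ) ∈ Icc (0:ℝ) 1 := by norm_num
    have hmemσ : σ/4 ∈ Icc (0:ℝ) 1 := by constructor <;> nlinarith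
    set q0 : ↥(cube d) := ⟨upd p.1 (fin0 hd) 0, upd_mem _ p.2 _ _ hmem0⟩ with hq0
    set q1 : ↥(cube d) := ⟨upd p.1 (fin0 hd) (σ/4), upd_mem _ p.2 _ _ hmemσ⟩ with hq1
    have hv0 : q0.1 (fin1 hd) = v := upd_other p.1 (fin0 hd) (fin1 hd) 0 (fin1_ne_fin0 hd)
    have hv1 : q1.1 (fin1 hd) = v := upd_other p.1 (fin0 hd) (fin1 hd) (σ/4) (fin1_ne_fin0 hd)
    have hg0 : gfun A σ δ (q0.1 (fin0 hd)) (q0.1 (fin1 hd)) = 0 := by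
      rw [hv0, show q0.1 (fin0 hd) = 0 from upd_same p.1 (fin0 hd) 0]
      exact gfun_zero hA hA64 hσ hσA v
    have hg1 : gfun A σ δ (q1.1 (fin0 hd)) (q1.1 (fin1 hd)) = 16*A + A * cfun δ v := by
      rw [hv1, show q1.1 (fin0 hd) = σ/4 from upd_same p.1 (fin0 hd) (σ/4),
        gfun_plateau hA hA64 hσ hσA _ _ le_rfl (by nlinarith), mfun_left hA hA64 hσ hσA]
    have hc0 := cfun_nonneg (δ:=δ) v
    have hc1 := cfun_le_one (δ:=δ) v
    rcases le_or_gt (8*A) (gfun A σ δ u v) with hbig | hsmall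
    · refine ⟨q0, ?_, ?_⟩
      · rw [Subtype.dist_eq, dist_comm, upd_dist]
        rw [abs_le]; constructor <;> nlinarith [hu.1, hu.2, hu_def]
      · refine le_trans ?_ (himg_lb q0)
        rw [Real.dist_eq, hg0, sub_zero, abs_of_nonneg (gfun_mem (δ:=δ) hA hA64 hσ hσA u v hu).1]
        linarith
    · refine ⟨q1, ?_, ?_⟩
      · rw [Subtype.dist_eq, dist_comm, upd_dist]
        rw [abs_le]; constructor <;> nlinarith [hu.1, hu.2, hu_def]
      · refine le_trans ?_ (himg_lb q1)
        rw [Real.dist_eq, hg1, le_abs]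
        right
        nlinarith [mul_nonneg hA.le hc0]
  rcases le_or_gt u (1-σ/4) with hcase2 | hcase2
  · -- middle case
    have hθ : cfun δ v ∈ Icc (0:ℝ) 1 := ⟨cfun_nonneg v, cfun_le_one v⟩
    obtain ⟨y, hy, hnear, hfar⟩ := exists_partner hA hA64 hσ hσA v (cfun δ v) hv hθ hδpos h100
    set q : ↥(cube d) := ⟨upd p.1 (fin1 hd) y, upd_mem _ p.2 _ _ hy⟩ with hq
    have hq0c : q.1 (fin0 hd) = u := upd_other p.1 (fin1 hd) (fin0 hd) y (Ne.symm (fin1_ne_fin0 hd))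
    have hq1c : q.1 (fin1 hd) = y := upd_same p.1 (fin1 hd) y
    refine ⟨q, ?_, ?_⟩
    · rw [Subtype.dist_eq, dist_comm, upd_dist, abs_sub_comm]
      linarith
    · refine le_trans ?_ (himg_lb q)
      rw [hq0c, hq1c, gfun_plateau hA hA64 hσ hσA _ _ hcase hcase2,
        gfun_plateau hA hA64 hσ hσA _ _ hcase hcase2, Real.dist_eq]
      have e : mfun A σ u + A * cfun δ v - (mfun A σ u + A * cfun δ y)
          = A * (cfun δ v - cfun δ y) := by ring
      rw [e, abs_mul, abs_of_pos hA]
      calc A/2 = A * (1/2) := by ring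
        _ ≤ A * |cfun δ v - cfun δ y| := by
            apply mul_le_mul_of_nonneg_left hfar hA.le
  · -- right face case
    have hmem0 : (1:ℝ) ∈ Icc (0:ℝ) 1 := by norm_num
    have hmemσ : 1-σ/4 ∈ Icc (0:ℝ) 1 := by constructor <;> nlinarith
    set q0 : ↥(cube d) := ⟨upd p.1 (fin0 hd) 1, upd_mem _ p.2 _ _ hmem0⟩ with hq0
    set q1 : ↥(cube d) := ⟨upd p.1 (fin0 hd) (1-σ/4), upd_mem _ p.2 _ _ hmemσ⟩ with hq1
    have hv0 : q0.1 (fin1 hd) = v := upd_other p.1 (fin0 hd) (fin1 hd) 1 (fin1_ne_fin0 hd)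
    have hv1 : q1.1 (fin1 hd) = v := upd_other p.1 (fin0 hd) (fin1 hd) (1-σ/4) (fin1_ne_fin0 hd)
    have hg0 : gfun A σ δ (q0.1 (fin0 hd)) (q0.1 (fin1 hd)) = 1 := by
      rw [hv0, show q0.1 (fin0 hd) = 1 from upd_same p.1 (fin0 hd) 1]
      exact gfun_one hA hA64 hσ hσA v
    have hg1 : gfun A σ δ (q1.1 (fin0 hd)) (q1.1 (fin1 hd)) = 1 - 16*A + A * cfun δ v := by
      rw [hv1, show q1.1 (fin0 hd) = 1-σ/4 from upd_same p.1 (fin0 hd) (1-σ/4),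
        gfun_plateau hA hA64 hσ hσA _ _ (by nlinarith) le_rfl, mfun_right hA hA64 hσ hσA]
    have hc0 := cfun_nonneg (δ:=δ) v
    have hc1 := cfun_le_one (δ:=δ) v
    rcases le_or_gt (gfun A σ δ u v) (1 - 8*A) with hbig | hsmall
    · refine ⟨q0, ?_, ?_⟩
      · rw [Subtype.dist_eq, dist_comm, upd_dist]
        rw [abs_le]; constructor <;> nlinarith [hu.1, hu.2, hu_def, hcase2]
      · refine le_trans ?_ (himg_lb q0)
        rw [Real.dist_eq, hg0, le_abs]
        right
        nlinarith
    · refine ⟨q1, ?_, ?_⟩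
      · rw [Subtype.dist_eq, dist_comm, upd_dist]
        rw [abs_le]; constructor <;> nlinarith [hu.1, hu.2, hu_def, hcase2]
      · refine le_trans ?_ (himg_lb q1)
        rw [Real.dist_eq, hg1, le_abs]
        left
        nlinarith [mul_nonneg hA.le hc0, mul_le_mul_of_nonneg_left hc1 hA.le]

end phi
end ND
namespace ND
open Metric Set

section top
variable {d : ℕ}

/-- the open "n-stretched somewhere near every point" set, in `C(K,K)`. -/
def St (d : ℕ) (n : ℕ) : Set C(↥(cube d), ↥(cube d)) :=
  {f | ∀ x, ∃ y, dist x y < 1/((n:ℝ)+1) ∧ ((n:ℝ)+1) * dist x y < dist (f x) (f y)}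

lemma isOpen_St (n : ℕ) : IsOpen (St d n) := by
  rw [Metric.isOpen_iff]
  intro f hf
  choose y hy1 hy2 using hf
  set e : ↥(cube d) → ℝ := fun x => dist (f x) (f (y x)) - ((n:ℝ)+1) * dist x (y x) with he
  have hepos : ∀ x, 0 < e x := fun x => by simp only [he]; linarith [hy2 x]
  set V : ↥(cube d) → Set ↥(cube d) := fun x =>
    {x' | dist x' (y x) < 1/((n:ℝ)+1) ∧
      ((n:ℝ)+1) * dist x' (y x) + e x / 2 < dist (f x') (f (y x))} with hV
  have hVopen : ∀ x, IsOpen (V x) := by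
    intro x
    apply IsOpen.inter
    · exact isOpen_lt (Continuous.dist continuous_id continuous_const) continuous_const
    · exact isOpen_lt
        ((continuous_const.mul (continuous_id.dist continuous_const)).add continuous_const)
        ((f.continuous).dist continuous_const)
  have hVmem : ∀ x, x ∈ V x := by
    intro x
    refine ⟨hy1 x, ?_⟩
    have := hepos x
    simp only [he] at this ⊢
    linarith
  have hcover : (univ : Set ↥(cube d)) ⊆ ⋃ x, V x := fun x _ => mem_iUnion.2 ⟨x, hVmem x⟩
  obtain ⟨t, ht⟩ := isCompact_univ.elim_finite_subcover V hVopen hcover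
  have htne : t.Nonempty := by
    obtain ⟨x0⟩ := (inferInstance : Nonempty ↥(cube d))
    obtain ⟨x', hx'⟩ := mem_iUnion.1 (ht (mem_univ x0))
    rw [mem_iUnion] at hx'
    obtain ⟨hxt, _⟩ := hx'
    exact ⟨x', hxt⟩
  set δ0 := t.inf' htne e / 4 with hδ0
  have hδ0pos : 0 < δ0 := by
    rw [hδ0]
    have := Finset.lt_inf'_iff (f := e) htne (a := 0)
    have h2 : 0 < t.inf' htne e := (Finset.lt_inf'_iff htne).2 fun b _ => hepos b
    linarith
  refine ⟨δ0, hδ0pos, ?_⟩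
  intro g hg
  rw [mem_ball] at hg
  intro x
  obtain ⟨i, hmem⟩ := mem_iUnion.1 (ht (mem_univ x))
  rw [mem_iUnion] at hmem
  obtain ⟨hit, hxV⟩ := hmem
  obtain ⟨hd1, hd2⟩ := hxV
  refine ⟨y i, hd1, ?_⟩
  have hb1 : dist (g x) (f x) ≤ dist g f := ContinuousMap.dist_apply_le_dist x
  have hb2 : dist (g (y i)) (f (y i)) ≤ dist g f := ContinuousMap.dist_apply_le_dist (y i)
  have htri : dist (f x) (f (y i)) ≤ dist (f x) (g x) + dist (g x) (g (y i)) + dist (g (y i)) (f (y i)) :=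
    dist_triangle4 _ _ _ _
  have hinf : δ0 ≤ e i / 4 := by
    rw [hδ0]
    have h5 : t.inf' htne e ≤ e i := Finset.inf'_le e hit
    gcongr
  rw [dist_comm (f x) (g x)] at htri
  linarith
end top
end ND
namespace ND
open Metric Set

section approx
variable {d : ℕ} {A σ δ : ℝ}
variable (hA : 0 < A) (hA64 : A ≤ 1/64) (hσ : 0 < σ) (hσA : σ ≤ A) (hd : 2 ≤ d)
include hA hA64 hσ hσA

lemma phi_isHomeo : IsHomeomorph (phi (δ:=δ) hA hA64 hσ hσA hd) := by
  let E : ↥(cube d) ≃ ↥(cube d) := Equiv.ofBijective _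
    ⟨phi_inj (δ:=δ) hA hA64 hσ hσA hd, phi_surj (δ:=δ) hA hA64 hσ hσA hd⟩
  have hc : Continuous ⇑E := phi_cont (δ:=δ) hA hA64 hσ hσA hd
  exact (hc.homeoOfEquivCompactToT2).isHomeomorph

end approx

lemma exists_approx {d : ℕ} (hd : 2 ≤ d) (f : HomeoCube d) (n : ℕ) (ε : ℝ) (hε : 0 < ε) :
    ∃ g : HomeoCube d, dist g.1 f.1 < ε ∧ g.1 ∈ St d n := by
  set A := min ε 1 / 64 with hA_def
  have hA : 0 < A := div_pos (lt_min hε one_pos) (by norm_num)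
  have hA64 : A ≤ 1/64 := by
    rw [hA_def]
    have := min_le_right ε 1
    linarith
  have h17 : 17*A < ε := by
    have h1 := min_le_left ε 1
    rw [hA_def]
    nlinarith
  set s := A/2 with hs_def
  set τ := min (1/((n:ℝ)+1)) (s/((n:ℝ)+1)) with hτ_def
  have hspos : 0 < s := by rw [hs_def]; positivity
  have hτpos : 0 < τ := lt_min (by positivity) (by positivity)
  set F := IsHomeomorph.homeomorph ⇑f.1 f.2 with hF_def
  have hUC : UniformContinuous ⇑F.symm :=
    CompactSpace.uniformContinuous_of_continuous F.symm.continuous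
  rw [Metric.uniformContinuous_iff] at hUC
  obtain ⟨σ0, hσ0pos, hσ0⟩ := hUC τ hτpos
  set σ := min (σ0/2) A with hσ_def
  have hσpos : 0 < σ := lt_min (by linarith) hA
  have hσA : σ ≤ A := min_le_right _ _
  set δ := σ/100 with hδ_def
  have hδpos : 0 < δ := by rw [hδ_def]; positivity
  have h100 : 100*δ ≤ σ := by rw [hδ_def]; linarith
  set Φ := phi (δ:=δ) hA hA64 hσpos hσA hd with hΦ_def
  set G : C(↥(cube d), ↥(cube d)) :=
    ⟨Φ ∘ ⇑f.1, (phi_cont (δ:=δ) hA hA64 hσpos hσA hd).comp f.1.continuous⟩ with hG_def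
  have hGhom : IsHomeomorph ⇑G := by
    have e : ⇑G = Φ ∘ ⇑f.1 := rfl
    rw [e, hΦ_def]
    exact (phi_isHomeo (δ:=δ) hA hA64 hσpos hσA hd).comp f.2
  refine ⟨⟨G, hGhom⟩, ?_, ?_⟩
  · apply (ContinuousMap.dist_lt_iff hε).2
    intro x
    calc dist (G x) (f.1 x) = dist (Φ (f.1 x)) (f.1 x) := rfl
      _ ≤ 17*A := phi_dist (δ:=δ) hA hA64 hσpos hσA hd (f.1 x)
      _ < ε := h17
  · intro x
    obtain ⟨q, hpq, himg⟩ := phi_stretch (δ:=δ) hA hA64 hσpos hσA hd hδpos h100 (f.1 x)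
    have hxp : F.symm (f.1 x) = x := F.symm_apply_apply x
    have hlt : dist (f.1 x) q < σ0 := by
      have h1 : σ ≤ σ0/2 := min_le_left _ _
      linarith
    have hdxy : dist x (F.symm q) < τ := by
      have := hσ0 hlt
      rwa [hxp] at this
    refine ⟨F.symm q, ?_, ?_⟩
    · exact lt_of_lt_of_le hdxy (min_le_left _ _)
    · have hGy : G (F.symm q) = Φ q := by
        show Φ (f.1 (F.symm q)) = Φ q
        congr 1
        exact F.apply_symm_apply q
      have hGx : G x = Φ (f.1 x) := rfl
      rw [hGx, hGy]
      calc ((n:ℝ)+1) * dist x (F.symm q)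
          < ((n:ℝ)+1) * (s/((n:ℝ)+1)) := by
            apply mul_lt_mul_of_pos_left (lt_of_lt_of_le hdxy (min_le_right _ _)) (by positivity)
        _ = s := by field_simp
        _ ≤ dist (Φ (f.1 x)) (Φ q) := himg

end ND

/-- For `d ≥ 2`, the set of homeomorphisms `f` of `[0,1]^d` such that
`limsup_{y→x} |f(x) - f(y)| / |x - y| = ∞` at every point `x` is comeager;
in particular the generic homeomorphism of the cube is nowhere differentiable. -/
theorem stmt14 (d : ℕ) (hd : 2 ≤ d) :
    {f : HomeoCube d | ∀ x : ↥(cube d), ∀ C : ℝ,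
        ∃ᶠ y in 𝓝[≠] x, C < dist (f.1 x) (f.1 y) / dist x y} ∈
      residual (HomeoCube d) := by
  rw [mem_residual_iff]
  refine ⟨Set.range (fun n : ℕ => (fun f : HomeoCube d => f.1) ⁻¹' ND.St d n),
    ?_, ?_, ?_, ?_⟩
  · rintro t ⟨n, rfl⟩
    exact IsOpen.preimage continuous_subtype_val (ND.isOpen_St n)
  · rintro t ⟨n, rfl⟩
    rw [dense_iff_inter_open]
    rintro U hU ⟨f, hfU⟩
    obtain ⟨W, hW, hUW⟩ := isOpen_induced_iff.1 hU
    rw [← hUW] at hfU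
    obtain ⟨ε, hεpos, hball⟩ := Metric.isOpen_iff.1 hW f.1 hfU
    obtain ⟨g, hg1, hg2⟩ := ND.exists_approx hd f n ε hεpos
    refine ⟨g, ?_, hg2⟩
    rw [← hUW]
    exact hball (mem_ball.2 hg1)
  · exact countable_range _
  · rintro f hf x C
    rw [Filter.frequently_iff]
    intro U hU
    rw [Metric.mem_nhdsWithin_iff] at hU
    obtain ⟨ε, hεpos, hball⟩ := hU
    obtain ⟨n, hn⟩ := exists_nat_gt (max (1/ε) C)
    have hfn : f.1 ∈ ND.St d n := hf _ ⟨n, rfl⟩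
    obtain ⟨y, h1, h2⟩ := hfn x
    have hne : y ≠ x := by
      intro h
      subst h
      rw [dist_self, dist_self] at h2
      simp at h2
    have hpos : 0 < dist x y := dist_pos.2 (fun h => hne h.symm)
    have hmax1 : 1/ε < (n:ℝ) := lt_of_le_of_lt (le_max_left _ _) hn
    have hmax2 : C < (n:ℝ) := lt_of_le_of_lt (le_max_right _ _) hn
    have hεn : 1/((n:ℝ)+1) < ε := by
      rw [div_lt_iff₀ (by positivity)]
      have he : (1/ε)*ε = 1 := by field_simp
      nlinarith
    refine ⟨y, hball ⟨?_, ?_⟩, ?_⟩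
    · rw [mem_ball, dist_comm]
      linarith
    · simp only [Set.mem_compl_iff, Set.mem_singleton_iff]
      exact hne
    · rw [lt_div_iff₀ hpos]
      have h3 : ((n:ℝ))*dist x y + dist x y = ((n:ℝ)+1)*dist x y := by ring
      have h4 : C * dist x y < (n:ℝ) * dist x y := mul_lt_mul_of_pos_right hmax2 hpos
      linarith
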